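/- arXiv:1601.04987 — 4 statements merged into one kernel-verified Lean document; each statement's English description precedes it below -/
import Mathlib

section
/- For an SFT with irreducible matrix, the lower topological pressure satisfies P(t) = log(ρ(A S^{(t)})) for every t > 0; in particular the unique zero h of P is the unique value with ρ(A S^{(h)}) = 1. -/
open Filter Finset

/-- Allowable words of length `n` of the SFT on `Fin m` with forbidden words `F` of length `k`. -/
noncomputable def allowWords (m k : ℕ) (F : Finset (Fin k → Fin m)) (n : ℕ) :
    Finset (Fin n → Fin m) :=
  open scoped Classical in
  Finset.univ.filter (fun ω => ∀ (j : ℕ) (hj : j + k ≤ n),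
    (fun i : Fin k => ω ⟨j + i.1, by omega⟩) ∉ F)

section auxnorm
variable {I : Type*} [Fintype I] [DecidableEq I]

attribute [local instance] Matrix.linftyOpNormedRing Matrix.linftyOpNormedAlgebra

lemma aux_norm_le_sum (C : Matrix I I ℝ) (h : ∀ i j, 0 ≤ C i j) :
    ‖C.map (Complex.ofReal ·)‖ ≤ ∑ i, ∑ j, C i j := by
  have hb : (0:ℝ) ≤ ∑ i, ∑ j, C i j :=
    Finset.sum_nonneg fun i _ => Finset.sum_nonneg fun j _ => h i j
  rw [Matrix.linfty_opNorm_def, ← Real.coe_toNNReal _ hb, NNReal.coe_le_coe]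
  refine Finset.sup_le fun i _ => ?_
  rw [← NNReal.coe_le_coe, Real.coe_toNNReal _ hb, NNReal.coe_sum]
  have : ∀ j, ((‖(C.map (Complex.ofReal ·)) i j‖₊ : ℝ)) = C i j := by
    intro j
    simp [Matrix.map_apply, Complex.norm_real, abs_of_nonneg (h i j)]
  simp_rw [this]
  exact Finset.single_le_sum (f := fun i => ∑ j, C i j)
    (fun i _ => Finset.sum_nonneg fun j _ => h i j) (Finset.mem_univ i)

lemma aux_row_le_norm (C : Matrix I I ℝ) (h : ∀ i j, 0 ≤ C i j) (i : I) :
    ∑ j, C i j ≤ ‖C.map (Complex.ofReal ·)‖ := by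
  rw [Matrix.linfty_opNorm_def]
  have := Finset.le_sup (f := fun i => ∑ j, ‖(C.map (Complex.ofReal ·)) i j‖₊)
    (Finset.mem_univ i)
  have h2 := NNReal.coe_le_coe.2 this
  rw [NNReal.coe_sum] at h2
  refine le_trans (le_of_eq ?_) h2
  refine Finset.sum_congr rfl fun j _ => ?_
  simp [Matrix.map_apply, Complex.norm_real, abs_of_nonneg (h i j)]

end auxnorm

attribute [local instance] Matrix.linftyOpNormedRing Matrix.linftyOpNormedAlgebra

/-- For an SFT with irreducible adjacency matrix `A`, the lower topological
pressure satisfies `P t = log ρ(A S^{(t)})` for every `t > 0`; in particular, for `h > 0`,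
`P h = 0` if and only if `ρ(A S^{(h)}) = 1`. -/
theorem pressure_eq_log_spectral_radius
    (m k : ℕ) (hm : 0 < m) (hk : 2 ≤ k)
    (c : Fin m → ℝ) (hc : ∀ i, 0 < c i ∧ c i < 1)
    (F : Finset (Fin k → Fin m))
    (A : Matrix (Fin (k - 1) → Fin m) (Fin (k - 1) → Fin m) ℝ)
    (hA01 : ∀ τ ξ, A τ ξ = 0 ∨ A τ ξ = 1)
    (hirr : ∀ τ ξ, ∃ n : ℕ, 1 ≤ n ∧ 0 < (A ^ n) τ ξ)
    (S0t St : ℝ → Matrix (Fin (k - 1) → Fin m) (Fin (k - 1) → Fin m) ℝ)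
    (hS0t : ∀ t, S0t t = Matrix.diagonal (fun τ => (∏ i, c (τ i)) ^ t))
    (hSt : ∀ t, St t = Matrix.diagonal (fun ξ => c (ξ ⟨k - 2, by omega⟩) ^ t))
    -- the sum of the entries of `S₀^{(t)} (A S^{(t)})^n` equals the sum of `c_ω^t` over the
    -- allowable words of length `n + k - 1` (Lemma 3.6)
    (hbridge : ∀ (t : ℝ) (n : ℕ), 1 ≤ n →
      ∑ τ, ∑ ξ, (S0t t * (A * St t) ^ n) τ ξ =
        ∑ ω ∈ allowWords m k F (n + k - 1), (∏ i, c (ω i)) ^ t)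
    -- `rho t` is the spectral radius of `A S^{(t)}`
    (rho : ℝ → ℝ)
    (hrho : ∀ t, IsGreatest {x : ℝ | ∃ μ : ℂ,
      μ ∈ spectrum ℂ ((A * St t).map (Complex.ofReal ·)) ∧ x = ‖μ‖} (rho t))
    (hrhopos : ∀ t, 0 < rho t)
    (P : ℝ → ℝ)
    (hP : ∀ t : ℝ, Tendsto
      (fun n : ℕ => (1 / (n : ℝ)) *
        Real.log (∑ ω ∈ allowWords m k F n, (∏ i, c (ω i)) ^ t))
      atTop (nhds (P t))) :
    (∀ t : ℝ, 0 < t → P t = Real.log (rho t)) ∧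
    (∀ h : ℝ, 0 < h → (P h = 0 ↔ rho h = 1)) := by
  classical
  haveI : NeZero m := ⟨hm.ne'⟩
  haveI : CompleteSpace (Matrix (Fin (k - 1) → Fin m) (Fin (k - 1) → Fin m) ℂ) :=
    FiniteDimensional.complete ℂ _
  have main : ∀ t : ℝ, 0 < t → P t = Real.log (rho t) := by
    intro t ht
    set B : Matrix (Fin (k - 1) → Fin m) (Fin (k - 1) → Fin m) ℝ := A * St t with hB
    set a : Matrix (Fin (k - 1) → Fin m) (Fin (k - 1) → Fin m) ℂ :=
      B.map (Complex.ofReal ·) with ha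
    -- entries of B are nonnegative
    have hBnn : ∀ τ ξ, 0 ≤ B τ ξ := by
      intro τ ξ
      rw [hB, hSt, Matrix.mul_diagonal]
      have hd : (0:ℝ) ≤ c (ξ ⟨k - 2, by omega⟩) ^ t := (Real.rpow_pos_of_pos (hc _).1 t).le
      rcases hA01 τ ξ with h | h <;> rw [h] <;> simp [hd]
    have hPnn : ∀ n, ∀ τ ξ, 0 ≤ (B ^ n) τ ξ := by
      intro n
      induction n with
      | zero =>
        intro τ ξ
        by_cases hτξ : τ = ξ <;> simp [Matrix.one_apply, hτξ]
      | succ n ih =>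
        intro τ ξ
        rw [pow_succ, Matrix.mul_apply]
        exact Finset.sum_nonneg fun j _ => mul_nonneg (ih τ j) (hBnn j ξ)
    have hapow : ∀ n : ℕ, a ^ n = (B ^ n).map (Complex.ofReal ·) := by
      intro n
      have h1 : a = Complex.ofRealHom.mapMatrix B := rfl
      rw [h1, ← map_pow]
      rfl
    set E : ℕ → ℝ := fun n => ∑ τ, ∑ ξ, (B ^ n) τ ξ with hE
    have hnormle : ∀ n, ‖a ^ n‖ ≤ E n := by
      intro n
      rw [hapow]
      exact aux_norm_le_sum _ (hPnn n)
    set N : ℕ := Fintype.card (Fin (k - 1) → Fin m) with hN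
    have hElenorm : ∀ n, E n ≤ N * ‖a ^ n‖ := by
      intro n
      calc E n ≤ ∑ _τ : (Fin (k - 1) → Fin m), ‖a ^ n‖ := by
            refine Finset.sum_le_sum fun τ _ => ?_
            rw [hapow]
            exact aux_row_le_norm _ (hPnn n) τ
        _ = N * ‖a ^ n‖ := by rw [Finset.sum_const, hN, Finset.card_univ, nsmul_eq_mul]
    -- spectral data
    obtain ⟨⟨μ0, hμ0mem, hμ0⟩, hub⟩ := hrho t
    have hμ0norm : ‖μ0‖ = rho t := by rw [hμ0]
    have hnormpos : ∀ n, 0 < ‖a ^ n‖ := by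
      intro n
      have h2 : μ0 ^ n ∈ spectrum ℂ (a ^ n) :=
        spectrum.pow_image_subset (𝕜 := ℂ) a n ⟨μ0, hμ0mem, rfl⟩
      have h3 := spectrum.norm_le_norm_of_mem h2
      have hr : (0:ℝ) < ‖μ0‖ ^ n := pow_pos (hμ0norm ▸ hrhopos t) n
      calc (0:ℝ) < ‖μ0‖ ^ n := hr
        _ ≤ ‖a ^ n‖ := by simpa [norm_pow] using h3
    have hEpos : ∀ n, 0 < E n := fun n => lt_of_lt_of_le (hnormpos n) (hnormle n)
    have hNpos : (0:ℝ) < N := by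
      have := Fintype.card_pos (α := Fin (k - 1) → Fin m)
      exact_mod_cast this
    -- Gelfand's formula
    have hsr : spectralRadius ℂ a = ENNReal.ofReal (rho t) := by
      apply le_antisymm
      · rw [spectralRadius]
        refine iSup₂_le fun μ hμ => ?_
        have hle : ‖μ‖ ≤ rho t := by
          have h4 := hub ⟨μ, hμ, rfl⟩
          exact h4
        rw [← enorm_eq_nnnorm, ← ofReal_norm]
        exact ENNReal.ofReal_le_ofReal hle
      · calc ENNReal.ofReal (rho t) = (‖μ0‖₊ : ENNReal) := by
              rw [← hμ0norm, ofReal_norm, enorm_eq_nnnorm]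
          _ ≤ spectralRadius ℂ a :=
              le_iSup₂ (f := fun k (_ : k ∈ spectrum ℂ a) => (‖k‖₊ : ENNReal)) μ0 hμ0mem
    have hgel0 := spectrum.pow_norm_pow_one_div_tendsto_nhds_spectralRadius a
    rw [hsr] at hgel0
    have hgel : Tendsto (fun n : ℕ => ‖a ^ n‖ ^ (1 / (n:ℝ))) atTop (nhds (rho t)) := by
      have hcont := (ENNReal.tendsto_toReal (ENNReal.ofReal_ne_top)).comp hgel0
      simp only [Function.comp_def] at hcont
      rw [ENNReal.toReal_ofReal (hrhopos t).le] at hcont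
      refine hcont.congr fun n => ?_
      rw [ENNReal.toReal_ofReal (Real.rpow_nonneg (norm_nonneg _) _)]
    have hlognorm : Tendsto (fun n : ℕ => (1/(n:ℝ)) * Real.log ‖a ^ n‖) atTop
        (nhds (Real.log (rho t))) := by
      have h5 := ((Real.continuousAt_log (hrhopos t).ne').tendsto).comp hgel
      simp only [Function.comp_def] at h5
      exact h5.congr fun n => Real.log_rpow (hnormpos n) _
    -- the diagonal weights
    set d0 : (Fin (k - 1) → Fin m) → ℝ := fun τ => (∏ i, c (τ i)) ^ t with hd0
    have hd0pos : ∀ τ, 0 < d0 τ :=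
      fun τ => Real.rpow_pos_of_pos (Finset.prod_pos fun i _ => (hc _).1) t
    have hne : (Finset.univ : Finset (Fin (k - 1) → Fin m)).Nonempty := Finset.univ_nonempty
    set dmin := Finset.univ.inf' hne d0 with hdmin
    set dmax := Finset.univ.sup' hne d0 with hdmax
    have hdminpos : 0 < dmin := by
      rw [hdmin, Finset.lt_inf'_iff]
      exact fun τ _ => hd0pos τ
    have hminle : ∀ τ, dmin ≤ d0 τ := fun τ => Finset.inf'_le _ (Finset.mem_univ τ)
    have hlemax : ∀ τ, d0 τ ≤ dmax := fun τ => Finset.le_sup' _ (Finset.mem_univ τ)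
    have hdmaxpos : 0 < dmax := lt_of_lt_of_le (hd0pos hne.choose) (hlemax _)
    set S : ℕ → ℝ := fun n => ∑ ω ∈ allowWords m k F n, (∏ i, c (ω i)) ^ t with hS
    have hbridge' : ∀ n, 1 ≤ n → S (n + k - 1) = ∑ τ, d0 τ * (∑ ξ, (B ^ n) τ ξ) := by
      intro n hn
      simp only [hS]
      rw [← hbridge t n hn, ← hB]
      refine Finset.sum_congr rfl fun τ _ => ?_
      rw [hS0t, Finset.mul_sum]
      refine Finset.sum_congr rfl fun ξ _ => ?_
      rw [Matrix.diagonal_mul]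
    have hSlow : ∀ n, 1 ≤ n → dmin * E n ≤ S (n + k - 1) := by
      intro n hn
      rw [hbridge' n hn]
      simp only [hE]
      rw [Finset.mul_sum]
      exact Finset.sum_le_sum fun τ _ =>
        mul_le_mul_of_nonneg_right (hminle τ) (Finset.sum_nonneg fun ξ _ => hPnn n τ ξ)
    have hShigh : ∀ n, 1 ≤ n → S (n + k - 1) ≤ dmax * E n := by
      intro n hn
      rw [hbridge' n hn]
      simp only [hE]
      rw [Finset.mul_sum]
      exact Finset.sum_le_sum fun τ _ =>
        mul_le_mul_of_nonneg_right (hlemax τ) (Finset.sum_nonneg fun ξ _ => hPnn n τ ξ)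
    have hSpos : ∀ n, 1 ≤ n → 0 < S (n + k - 1) :=
      fun n hn => lt_of_lt_of_le (mul_pos hdminpos (hEpos n)) (hSlow n hn)
    set u : ℕ → ℝ := fun n => (1/(n:ℝ)) * Real.log (S (n + k - 1)) with hu
    have hfrac : ∀ n : ℕ, (0:ℝ) ≤ 1/(n:ℝ) := fun n => by positivity
    have hlb : ∀ n : ℕ, 1 ≤ n →
        (1/(n:ℝ)) * Real.log dmin + (1/(n:ℝ)) * Real.log ‖a ^ n‖ ≤ u n := by
      intro n hn
      simp only [hu]
      rw [← mul_add, ← Real.log_mul hdminpos.ne' (hnormpos n).ne']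
      refine mul_le_mul_of_nonneg_left ?_ (hfrac n)
      refine Real.log_le_log (mul_pos hdminpos (hnormpos n)) ?_
      exact le_trans (mul_le_mul_of_nonneg_left (hnormle n) hdminpos.le) (hSlow n hn)
    have hub' : ∀ n : ℕ, 1 ≤ n →
        u n ≤ (1/(n:ℝ)) * Real.log (dmax * N) + (1/(n:ℝ)) * Real.log ‖a ^ n‖ := by
      intro n hn
      simp only [hu]
      rw [← mul_add, ← Real.log_mul (mul_pos hdmaxpos hNpos).ne' (hnormpos n).ne']
      refine mul_le_mul_of_nonneg_left ?_ (hfrac n)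
      refine Real.log_le_log (hSpos n hn) ?_
      calc S (n + k - 1) ≤ dmax * E n := hShigh n hn
        _ ≤ dmax * ((N : ℝ) * ‖a ^ n‖) :=
            mul_le_mul_of_nonneg_left (hElenorm n) hdmaxpos.le
        _ = dmax * (N : ℝ) * ‖a ^ n‖ := by ring
    have h1n : Tendsto (fun n : ℕ => 1/(n:ℝ)) atTop (nhds 0) :=
      tendsto_one_div_atTop_nhds_zero_nat
    have hlbl : Tendsto
        (fun n : ℕ => (1/(n:ℝ)) * Real.log dmin + (1/(n:ℝ)) * Real.log ‖a ^ n‖) atTop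
        (nhds (Real.log (rho t))) := by
      have h6 := (h1n.mul_const (Real.log dmin)).add hlognorm
      simpa using h6
    have hubl : Tendsto
        (fun n : ℕ => (1/(n:ℝ)) * Real.log (dmax * N) + (1/(n:ℝ)) * Real.log ‖a ^ n‖) atTop
        (nhds (Real.log (rho t))) := by
      have h6 := (h1n.mul_const (Real.log (dmax * N))).add hlognorm
      simpa using h6
    have huLim : Tendsto u atTop (nhds (Real.log (rho t))) :=
      tendsto_of_tendsto_of_tendsto_of_le_of_le' hlbl hubl
        (eventually_atTop.2 ⟨1, hlb⟩) (eventually_atTop.2 ⟨1, hub'⟩)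
    -- the P side
    have hidx : ∀ n : ℕ, n + (k - 1) = n + k - 1 := fun n => by omega
    have hPt : Tendsto (fun n : ℕ => (1/(n:ℝ)) * Real.log (S n)) atTop (nhds (P t)) := hP t
    have hshift : Tendsto
        (fun n : ℕ => (1/((n + k - 1 : ℕ):ℝ)) * Real.log (S (n + k - 1))) atTop
        (nhds (P t)) := by
      have h7 := hPt.comp (tendsto_add_atTop_nat (k - 1))
      simp only [Function.comp_def] at h7
      refine h7.congr fun n => ?_
      rw [hidx n]
    have hq : Tendsto (fun n : ℕ => ((n + k - 1 : ℕ):ℝ)/(n:ℝ)) atTop (nhds 1) := by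
      have h0 : Tendsto (fun n : ℕ => 1 + ((k - 1 : ℕ):ℝ) * (1/(n:ℝ))) atTop (nhds 1) := by
        have h8 := (tendsto_const_nhds (x := (1:ℝ)) (f := atTop)).add
          (h1n.const_mul ((k - 1 : ℕ):ℝ))
        simpa using h8
      refine h0.congr' ?_
      filter_upwards [eventually_ge_atTop 1] with n hn
      have hnz : ((n:ℝ)) ≠ 0 := Nat.cast_ne_zero.2 (by omega)
      rw [← hidx n, Nat.cast_add]
      field_simp
    have hcomb : Tendsto
        (fun n : ℕ => ((n + k - 1 : ℕ):ℝ)/(n:ℝ) *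
          ((1/((n + k - 1 : ℕ):ℝ)) * Real.log (S (n + k - 1)))) atTop (nhds (P t)) := by
      have h9 := hq.mul hshift
      simpa using h9
    have huP : Tendsto u atTop (nhds (P t)) := by
      refine Tendsto.congr' ?_ hcomb
      filter_upwards [eventually_ge_atTop 1] with n hn
      have hnz : ((n:ℝ)) ≠ 0 := Nat.cast_ne_zero.2 (by omega)
      have hmz : ((n + k - 1 : ℕ):ℝ) ≠ 0 := Nat.cast_ne_zero.2 (by omega)
      simp only [hu]
      have heq : ((n + k - 1 : ℕ):ℝ) / (n:ℝ) * (1 / ((n + k - 1 : ℕ):ℝ) * Real.log (S (n + k - 1)))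
          = (((n + k - 1 : ℕ):ℝ) * (1 / ((n + k - 1 : ℕ):ℝ))) * (1/(n:ℝ) * Real.log (S (n + k - 1))) := by
        ring
      rw [heq, one_div, mul_inv_cancel₀ hmz, one_mul]
    exact tendsto_nhds_unique huP huLim
  refine ⟨main, fun h hh => ?_⟩
  rw [main h hh]
  constructor
  · intro hlog
    rcases (Real.log_eq_zero).1 hlog with h0 | h1 | hm1
    · exact absurd h0 (hrhopos h).ne'
    · exact h1
    · exact absurd hm1 (by linarith [hrhopos h])
  · intro h1
    rw [h1, Real.log_one]
end

section
/- Let h be the unique zero of the lower topological pressure function of an SFT with irreducible matrix. Then there exist positive constants K_0, L_0 such that K_0 ≤ Σ_{ω ∈ W_n} c_ω^h ≤ L_0 for all n ≥ 1. -/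
open Filter Finset

/-- If `h` is the unique zero of the lower topological pressure function of
an SFT with irreducible matrix, then there are positive constants `K₀, L₀` with
`K₀ ≤ ∑_{ω ∈ W_n} c_ω^h ≤ L₀` for all `n ≥ 1`. -/
theorem word_sum_at_zero_bounded
    (m : ℕ) (hm : 0 < m) (c : Fin m → ℝ) (hc : ∀ i, 0 < c i ∧ c i < 1)
    (W : ∀ n : ℕ, Finset (Fin n → Fin m))
    (hWne : ∀ n, (W n).Nonempty)
    (P : ℝ → ℝ)
    (hP : ∀ t : ℝ, Tendsto
      (fun n : ℕ => (1 / (n : ℝ)) * Real.log (∑ ω ∈ W n, (∏ i, c (ω i)) ^ t))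
      atTop (nhds (P t)))
    (hanti : StrictAnti P)
    -- submultiplicativity of the word sums
    (hsub : ∀ (s : ℝ) (n p : ℕ), 1 ≤ n → 1 ≤ p →
      ∑ ω ∈ W (n * p), (∏ i, c (ω i)) ^ s ≤ (∑ ω ∈ W n, (∏ i, c (ω i)) ^ s) ^ p)
    -- the two-sided matrix growth estimate coming from the irreducible adjacency matrix
    (hgrow : ∀ s : ℝ, ∃ lam K L : ℝ, 0 < lam ∧ 0 < K ∧ 0 < L ∧ ∀ n : ℕ, 1 ≤ n →
      K * lam ^ n ≤ ∑ ω ∈ W n, (∏ i, c (ω i)) ^ s ∧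
      ∑ ω ∈ W n, (∏ i, c (ω i)) ^ s ≤ L * lam ^ n)
    (h : ℝ) (hh : 0 ≤ h) (hzero : P h = 0) :
    ∃ K0 L0 : ℝ, 0 < K0 ∧ 0 < L0 ∧ ∀ n : ℕ, 1 ≤ n →
      K0 ≤ ∑ ω ∈ W n, (∏ i, c (ω i)) ^ h ∧ ∑ ω ∈ W n, (∏ i, c (ω i)) ^ h ≤ L0 := by
  obtain ⟨lam, K, L, hlam, hK, hL, hKL⟩ := hgrow h
  -- show (1/n) log S_n → log lam by squeeze
  have hSpos : ∀ n : ℕ, 1 ≤ n → 0 < ∑ ω ∈ W n, (∏ i, c (ω i)) ^ h := fun n hn =>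
    lt_of_lt_of_le (by positivity) (hKL n hn).1
  have hlim : Tendsto
      (fun n : ℕ => (1 / (n : ℝ)) * Real.log (∑ ω ∈ W n, (∏ i, c (ω i)) ^ h))
      atTop (nhds (Real.log lam)) := by
    have hlow : Tendsto (fun n : ℕ => (1 / (n : ℝ)) * (Real.log K + n * Real.log lam))
        atTop (nhds (Real.log lam)) := by
      have h1 : Tendsto (fun n : ℕ => Real.log K / (n : ℝ)) atTop (nhds 0) :=
        tendsto_const_nhds.div_atTop tendsto_natCast_atTop_atTop
      have : Tendsto (fun n : ℕ => Real.log K / (n : ℝ) + Real.log lam) atTop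
          (nhds (0 + Real.log lam)) := h1.add tendsto_const_nhds
      rw [zero_add] at this
      refine this.congr' ?_
      filter_upwards [eventually_gt_atTop 0] with n hn
      have hn' : (n : ℝ) ≠ 0 := by positivity
      field_simp
    have hhigh : Tendsto (fun n : ℕ => (1 / (n : ℝ)) * (Real.log L + n * Real.log lam))
        atTop (nhds (Real.log lam)) := by
      have h1 : Tendsto (fun n : ℕ => Real.log L / (n : ℝ)) atTop (nhds 0) :=
        tendsto_const_nhds.div_atTop tendsto_natCast_atTop_atTop
      have : Tendsto (fun n : ℕ => Real.log L / (n : ℝ) + Real.log lam) atTop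
          (nhds (0 + Real.log lam)) := h1.add tendsto_const_nhds
      rw [zero_add] at this
      refine this.congr' ?_
      filter_upwards [eventually_gt_atTop 0] with n hn
      have hn' : (n : ℝ) ≠ 0 := by positivity
      field_simp
    refine tendsto_of_tendsto_of_tendsto_of_le_of_le' hlow hhigh ?_ ?_
    · filter_upwards [eventually_ge_atTop 1] with n hn
      have h1 : Real.log (K * lam ^ n) ≤ Real.log (∑ ω ∈ W n, (∏ i, c (ω i)) ^ h) :=
        Real.log_le_log (by positivity) (hKL n hn).1
      rw [Real.log_mul (ne_of_gt hK) (by positivity), Real.log_pow] at h1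
      have hninv : (0:ℝ) ≤ 1 / (n : ℝ) := by positivity
      exact mul_le_mul_of_nonneg_left (by simpa using h1) hninv
    · filter_upwards [eventually_ge_atTop 1] with n hn
      have h1 : Real.log (∑ ω ∈ W n, (∏ i, c (ω i)) ^ h) ≤ Real.log (L * lam ^ n) :=
        Real.log_le_log (hSpos n hn) (hKL n hn).2
      rw [Real.log_mul (ne_of_gt hL) (by positivity), Real.log_pow] at h1
      have hninv : (0:ℝ) ≤ 1 / (n : ℝ) := by positivity
      exact mul_le_mul_of_nonneg_left (by simpa using h1) hninv
  have hloglam : Real.log lam = 0 := by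
    have := tendsto_nhds_unique hlim (hP h)
    rw [hzero] at this
    exact this
  have hlam1 : lam = 1 := by
    have := Real.exp_log hlam
    rw [hloglam, Real.exp_zero] at this
    exact this.symm
  refine ⟨K, L, hK, hL, fun n hn => ?_⟩
  have := hKL n hn
  simp only [hlam1, one_pow, mul_one] at this
  exact this
end

section
/- For the subfractal F_{X_A} of an HIFS satisfying the OSC, induced by an SFT with irreducible matrix A: dim_H(F_{X_A}) ≤ H, where H is the unique zero of the upper topological pressure function P̄. -/
open Filter Finset MeasureTheory

/-- `applyWord f ω x = f_{ω_n} ∘ ⋯ ∘ f_{ω_1} (x)`. -/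
def applyWord {X : Type*} {m : ℕ} (f : Fin m → X → X) {l : ℕ}
    (ω : Fin l → Fin m) (x : X) : X :=
  (List.ofFn ω).foldl (fun y a => f a y) x

theorem applyWord_succ {X : Type*} {m : ℕ} (f : Fin m → X → X) {l : ℕ}
    (ω : Fin (l+1) → Fin m) (x : X) :
    applyWord f ω x = applyWord f (fun i => ω i.succ) (f (ω 0) x) := by
  simp [applyWord, List.ofFn_succ]

/-- For the subfractal `F_{X_A}` of an HIFS satisfying the OSC, induced by
an SFT with irreducible matrix: `dim_H (F_{X_A}) ≤ H`, where `H` is the unique zero of the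
upper topological pressure function `P̄`. -/
theorem subfractal_dimH_upper_bound
    {d : ℕ} (m : ℕ) (hm : 0 < m)
    (K : Set (EuclideanSpace ℝ (Fin d))) (hK : IsCompact K) (hKne : K.Nonempty)
    (f : Fin m → EuclideanSpace ℝ (Fin d) → EuclideanSpace ℝ (Fin d))
    (hfK : ∀ i, Set.MapsTo (f i) K K)
    (c cbar : Fin m → ℝ) (hc : ∀ i, 0 < c i ∧ c i ≤ cbar i ∧ cbar i < 1)
    (hlip : ∀ i, ∀ x ∈ K, ∀ y ∈ K,
      c i * dist x y ≤ dist (f i x) (f i y) ∧ dist (f i x) (f i y) ≤ cbar i * dist x y)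
    -- the open set condition
    (U : Set (EuclideanSpace ℝ (Fin d))) (hUopen : IsOpen U) (hUne : U.Nonempty)
    (hUK : U ⊆ K) (hUinv : ∀ i, f i '' U ⊆ U)
    (hUdisj : ∀ i j, i ≠ j → (f i '' U) ∩ (f j '' U) = ∅)
    -- the SFT and its subfractal, given by the coding map `π`
    (W : ∀ n : ℕ, Finset (Fin n → Fin m)) (hWne : ∀ n, (W n).Nonempty)
    (π : {x : ℕ → Fin m // ∀ n : ℕ, (fun i : Fin n => x i.1) ∈ W n} →
      EuclideanSpace ℝ (Fin d))
    (hπ : ∀ x (l : ℕ), π x ∈ applyWord f (fun i : Fin l => x.1 i.1) '' K)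
    -- the upper topological pressure function and its unique zero `H`
    (Pbar : ℝ → ℝ)
    (hPbar : ∀ t : ℝ, Tendsto
      (fun n : ℕ => (1 / (n : ℝ)) * Real.log (∑ ω ∈ W n, (∏ i, cbar (ω i)) ^ t))
      atTop (nhds (Pbar t)))
    (H : ℝ) (hH0 : 0 ≤ H) (hHzero : Pbar H = 0)
    (L1 : ℝ) (hL1pos : 0 < L1)
    (hL1 : ∀ n : ℕ, 1 ≤ n → ∑ ω ∈ W n, (∏ i, cbar (ω i)) ^ H ≤ L1) :
    dimH (Set.range π) ≤ ENNReal.ofReal H := by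
  have hcbar_pos : ∀ i, 0 < cbar i := fun i => (hc i).1.trans_le (hc i).2.1
  have hprod_nonneg : ∀ {l : ℕ} (ω : Fin l → Fin m), 0 ≤ ∏ i, cbar (ω i) :=
    fun ω => Finset.prod_nonneg fun i _ => (hcbar_pos _).le
  -- applyWord maps K into K
  have hmem : ∀ (l : ℕ) (ω : Fin l → Fin m), Set.MapsTo (applyWord f ω) K K := by
    intro l
    induction l with
    | zero => intro ω x hx; simpa [applyWord] using hx
    | succ l ih => intro ω x hx; rw [applyWord_succ]; exact ih _ (hfK _ hx)
  -- contraction estimate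
  have hdist : ∀ (l : ℕ) (ω : Fin l → Fin m), ∀ x ∈ K, ∀ y ∈ K,
      dist (applyWord f ω x) (applyWord f ω y) ≤ (∏ i, cbar (ω i)) * dist x y := by
    intro l
    induction l with
    | zero => intro ω x hx y hy; simp [applyWord]
    | succ l ih =>
      intro ω x hx y hy
      rw [applyWord_succ, applyWord_succ, Fin.prod_univ_succ]
      calc dist (applyWord f (fun i => ω i.succ) (f (ω 0) x))
            (applyWord f (fun i => ω i.succ) (f (ω 0) y))
          ≤ (∏ i : Fin l, cbar (ω i.succ)) * dist (f (ω 0) x) (f (ω 0) y) :=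
            ih _ _ (hfK _ hx) _ (hfK _ hy)
        _ ≤ (∏ i : Fin l, cbar (ω i.succ)) * (cbar (ω 0) * dist x y) :=
            mul_le_mul_of_nonneg_left (hlip _ _ hx _ hy).2 (hprod_nonneg _)
        _ = cbar (ω 0) * (∏ i : Fin l, cbar (ω i.succ)) * dist x y := by ring
  -- diameter of K
  set D := Metric.diam K with hD
  have hD0 : 0 ≤ D := Metric.diam_nonneg
  have hbd : Bornology.IsBounded K := hK.isBounded
  -- the maximal contraction ratio
  have : Nonempty (Fin m) := ⟨⟨0, hm⟩⟩
  set cmax := Finset.univ.sup' Finset.univ_nonempty cbar with hcmax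
  have hcmax_le : ∀ i, cbar i ≤ cmax := fun i => Finset.le_sup' cbar (Finset.mem_univ i)
  have hcmax0 : 0 ≤ cmax := (hcbar_pos ⟨0, hm⟩).le.trans (hcmax_le _)
  have hcmax1 : cmax < 1 := by
    rw [hcmax, Finset.sup'_lt_iff]
    exact fun i _ => (hc i).2.2
  have hprod_le : ∀ {l : ℕ} (ω : Fin l → Fin m), (∏ i, cbar (ω i)) ≤ cmax ^ l := by
    intro l ω
    calc (∏ i, cbar (ω i)) ≤ ∏ _i : Fin l, cmax :=
          Finset.prod_le_prod (fun i _ => (hcbar_pos _).le) (fun i _ => hcmax_le _)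
      _ = cmax ^ l := by simp
  -- the covers
  set t : ∀ n : ℕ, (W n) → Set (EuclideanSpace ℝ (Fin d)) :=
    fun n ω => applyWord f ω.1 '' K with ht_def
  set r : ℕ → ENNReal := fun n => ENNReal.ofReal (cmax ^ n * D) with hr_def
  have hr : Tendsto r atTop (nhds 0) := by
    have h1 : Tendsto (fun n : ℕ => cmax ^ n * D) atTop (nhds 0) := by
      simpa using (tendsto_pow_atTop_nhds_zero_of_lt_one hcmax0 hcmax1).mul_const D
    have := (ENNReal.continuous_ofReal.tendsto 0).comp h1
    simpa [hr_def, Function.comp_def] using this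
  have hdiam : ∀ (n : ℕ) (ω : Fin n → Fin m),
      EMetric.diam (applyWord f ω '' K) ≤ ENNReal.ofReal ((∏ i, cbar (ω i)) * D) := by
    intro n ω
    apply EMetric.diam_le
    rintro _ ⟨x, hx, rfl⟩ _ ⟨y, hy, rfl⟩
    rw [edist_dist]
    apply ENNReal.ofReal_le_ofReal
    calc dist (applyWord f ω x) (applyWord f ω y) ≤ (∏ i, cbar (ω i)) * dist x y :=
          hdist n ω x hx y hy
      _ ≤ (∏ i, cbar (ω i)) * D :=
          mul_le_mul_of_nonneg_left (Metric.dist_le_diam_of_mem hbd hx hy) (hprod_nonneg _)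
  have ht : ∀ n : ℕ, ∀ i : (W n), EMetric.diam (t n i) ≤ r n := by
    intro n i
    refine (hdiam n i.1).trans (ENNReal.ofReal_le_ofReal ?_)
    exact mul_le_mul_of_nonneg_right (hprod_le _) hD0
  have hst : ∀ n : ℕ, Set.range π ⊆ ⋃ i, t n i := by
    intro n
    rintro _ ⟨x, rfl⟩
    obtain ⟨y, hy, hEq⟩ := hπ x n
    exact Set.mem_iUnion.2 ⟨⟨_, x.2 n⟩, ⟨y, hy, hEq⟩⟩
  have main := MeasureTheory.Measure.hausdorffMeasure_le_liminf_sum H (Set.range π) r hr t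
    (Eventually.of_forall ht) (Eventually.of_forall hst)
  -- bound the sums
  have hsum : ∀ n : ℕ, 1 ≤ n →
      (∑ i : (W n), EMetric.diam (t n i) ^ H) ≤ ENNReal.ofReal (L1 * D ^ H) := by
    intro n hn
    calc (∑ i : (W n), EMetric.diam (t n i) ^ H)
        ≤ ∑ i : (W n), ENNReal.ofReal (((∏ j, cbar (i.1 j)) * D) ^ H) := by
          refine Finset.sum_le_sum fun i _ => ?_
          rw [← ENNReal.ofReal_rpow_of_nonneg (mul_nonneg (hprod_nonneg _) hD0) hH0]
          exact ENNReal.rpow_le_rpow (hdiam n i.1) hH0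
      _ = ENNReal.ofReal (∑ i : (W n), ((∏ j, cbar (i.1 j)) * D) ^ H) := by
          rw [ENNReal.ofReal_sum_of_nonneg]
          exact fun i _ => Real.rpow_nonneg (mul_nonneg (hprod_nonneg _) hD0) H
      _ ≤ ENNReal.ofReal (L1 * D ^ H) := by
          apply ENNReal.ofReal_le_ofReal
          have : (∑ i : (W n), ((∏ j, cbar (i.1 j)) * D) ^ H)
              = ∑ ω ∈ W n, (∏ j, cbar (ω j)) ^ H * D ^ H := by
            rw [← Finset.sum_attach (W n) (fun ω => (∏ j, cbar (ω j)) ^ H * D ^ H)]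
            refine Finset.sum_congr rfl fun i _ => ?_
            rw [Real.mul_rpow (hprod_nonneg _) hD0]
          rw [this, ← Finset.sum_mul]
          exact mul_le_mul_of_nonneg_right (hL1 n hn) (Real.rpow_nonneg hD0 H)
  have hlim : liminf (fun n : ℕ => ∑ i : (W n), EMetric.diam (t n i) ^ H) atTop
      ≤ ENNReal.ofReal (L1 * D ^ H) := by
    apply liminf_le_of_frequently_le'
    apply Eventually.frequently
    filter_upwards [eventually_ge_atTop 1] with n hn using hsum n hn
  have hne : μH[H] (Set.range π) ≠ ⊤ :=
    ((main.trans hlim).trans_lt ENNReal.ofReal_lt_top).ne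
  have hd := dimH_le_of_hausdorffMeasure_ne_top
    (d := H.toNNReal) (s := Set.range π) (by rwa [Real.coe_toNNReal H hH0])
  simpa [ENNReal.ofReal] using hd
end

section
/- If a subshift X decomposes as a finite union X = ⋃_{l=1}^p Y_l of subsets, and for each l the corresponding subfractal satisfies h_l ≤ dim_H(F_{Y_l}) ≤ H_l, then max_l h_l ≤ dim_H(F_X) ≤ max_l H_l, where F_X = π(X) and F_{Y_l} = π(Y_l) under the coding map π. In particular, for a sofic subshift with reducible matrix A_G having irreducible components A_1,...,A_k: max_{1≤i≤k} h_i ≤ dim_H(F_{X_{A_G}}) ≤ max_{1≤i≤k} H_i. -/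
open MeasureTheory Set
open scoped ENNReal

/-- If a subshift decomposes as a finite union, i.e. the subfractal
`F_X` is a finite union `F_X = ⋃_l F_{Y_l}` of subfractals with
`h_l ≤ dim_H F_{Y_l} ≤ H_l`, then `max_l h_l ≤ dim_H F_X ≤ max_l H_l`.  In particular, for
a sofic subshift with reducible matrix `A_G` having irreducible components `A_1, …, A_k`,
where the bounds of each piece of the decomposition are the pressure zeros `h_i, H_i` of
its terminal component (each component occurring): `max_i h_i ≤ dim_H F_{X_{A_G}} ≤ max_i H_i`. -/
theorem dimH_of_finite_union_decomposition
    {X : Type*} [EMetricSpace X]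
    (p : ℕ) (hp : 0 < p)
    (FX : Set X) (FY : Fin p → Set X)
    (hdecomp : FX = ⋃ l, FY l)
    (h H : Fin p → ℝ≥0∞)
    (hbounds : ∀ l, h l ≤ dimH (FY l) ∧ dimH (FY l) ≤ H l) :
    ((⨆ l, h l) ≤ dimH FX ∧ dimH FX ≤ ⨆ l, H l) ∧
    ∀ (k : ℕ) (hcomp Hcomp : Fin k → ℝ≥0∞) (ι : Fin p → Fin k),
      Function.Surjective ι →
      (∀ l, h l = hcomp (ι l) ∧ H l = Hcomp (ι l)) →
      (⨆ i, hcomp i) ≤ dimH FX ∧ dimH FX ≤ ⨆ i, Hcomp i := by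
  have hdim : dimH FX = ⨆ l, dimH (FY l) := by
    rw [hdecomp, dimH_iUnion]
  have hlow : (⨆ l, h l) ≤ dimH FX := by
    rw [hdim]
    exact iSup_mono fun l => (hbounds l).1
  have hhigh : dimH FX ≤ ⨆ l, H l := by
    rw [hdim]
    exact iSup_mono fun l => (hbounds l).2
  refine ⟨⟨hlow, hhigh⟩, fun k hcomp Hcomp ι hsurj heq => ?_⟩
  have h1 : (⨆ i, hcomp i) = ⨆ l, h l := by
    rw [← hsurj.iSup_comp hcomp]
    exact iSup_congr fun l => ((heq l).1).symm
  have h2 : (⨆ i, Hcomp i) = ⨆ l, H l := by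
    rw [← hsurj.iSup_comp Hcomp]
    exact iSup_congr fun l => ((heq l).2).symm
  exact ⟨h1 ▸ hlow, h2 ▸ hhigh⟩
end
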